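/- Let M be a positive measure on ℝ with compact support equal to an interval [α,β] with α < β, absolutely continuous with respect to Lebesgue measure, and let b be a self-adjoint element of a C*-probability space (A,τ) with faithful state whose distribution with respect to τ is M (so spectrum(b) = [α,β] and τ(f(b)) = ∫f dM for continuous f). Then the unital C*-algebra C*(1,b) contains a Haar unitary with respect to τ. -/

import Mathlib

open scoped ComplexOrder
open MeasureTheory
open Set

lemma cdf_cont (M : Measure ℝ) [IsProbabilityMeasure M] (hM : ∀ x : ℝ, M {x} = 0) :
    Continuous (ProbabilityTheory.cdf M) := by
  rw [continuous_iff_continuousAt]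
  intro x
  rw [(ProbabilityTheory.monotone_cdf M).continuousAt_iff_leftLim_eq_rightLim]
  have h1 : Function.rightLim (ProbabilityTheory.cdf M) x = ProbabilityTheory.cdf M x :=
    (ProbabilityTheory.cdf M).rightLim_eq x
  have h2 := (ProbabilityTheory.cdf M).measure_singleton x
  rw [ProbabilityTheory.measure_cdf, hM x] at h2
  have h3 : Function.leftLim (⇑(ProbabilityTheory.cdf M)) x ≤ ProbabilityTheory.cdf M x :=
    (ProbabilityTheory.monotone_cdf M).leftLim_le le_rfl
  have h4 : ProbabilityTheory.cdf M x - Function.leftLim (⇑(ProbabilityTheory.cdf M)) x ≤ 0 := by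
    by_contra h
    push_neg at h
    rw [eq_comm, ENNReal.ofReal_eq_zero] at h2
    linarith
  rw [h1]
  linarith

lemma cdf_map (α β : ℝ) (hαβ : α < β) (M : Measure ℝ) [IsProbabilityMeasure M]
    (hsupp₁ : M (Set.Icc α β)ᶜ = 0) (hcont : Continuous (ProbabilityTheory.cdf M)) :
    M.map (ProbabilityTheory.cdf M) = volume.restrict (Set.Ioc 0 1) := by
  set F := ProbabilityTheory.cdf M with hF
  have hFmeas : Measurable (⇑F) := hcont.measurable
  -- values
  have hF0 : F (α - 1) = 0 := by
    have h := ProbabilityTheory.ofReal_cdf (μ := M) (α - 1)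
    have : M (Iic (α - 1)) = 0 := by
      refine measure_mono_null ?_ hsupp₁
      intro x hx
      simp only [mem_compl_iff, mem_Icc, mem_Iic] at *
      intro h'
      linarith [h'.1]
    rw [this, ENNReal.ofReal_eq_zero] at h
    linarith [ProbabilityTheory.cdf_nonneg (μ := M) (α - 1)]
  have hFβ : F β = 1 := by
    have h := ProbabilityTheory.ofReal_cdf (μ := M) β
    have : M (Iic β) = 1 := by
      have h2 : M (Iic β) + M (Iic β)ᶜ = 1 := by
        rw [measure_add_measure_compl measurableSet_Iic, measure_univ]
      have h3 : M (Iic β)ᶜ = 0 := by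
        refine measure_mono_null ?_ hsupp₁
        intro x hx
        simp only [mem_compl_iff, mem_Iic, not_le, mem_Icc] at *
        intro h'
        linarith [h'.2]
      rw [h3, add_zero] at h2
      exact h2
    rw [this] at h
    have := ProbabilityTheory.cdf_nonneg (μ := M) β
    have h1 : ENNReal.ofReal (F β) = ENNReal.ofReal 1 := by simpa using h
    rwa [ENNReal.ofReal_eq_ofReal_iff this zero_le_one] at h1
  have : IsFiniteMeasure (M.map ⇑F) := by
    constructor
    rw [Measure.map_apply hFmeas MeasurableSet.univ]
    exact measure_lt_top M _
  refine MeasureTheory.Measure.ext_of_Iic _ _ (fun t => ?_)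
  rw [Measure.map_apply hFmeas measurableSet_Iic, Measure.restrict_apply measurableSet_Iic]
  have hrhs : Iic t ∩ Ioc (0:ℝ) 1 = Ioc 0 (min t 1) := by
    ext x; simp only [mem_inter_iff, mem_Iic, mem_Ioc, le_min_iff, mem_Ioc]
    tauto
  rw [hrhs, Real.volume_Ioc, sub_zero]
  rcases le_or_gt 1 t with ht | ht
  · have : F ⁻¹' Iic t = univ := by
      ext x; simp only [mem_preimage, mem_Iic, mem_univ, iff_true]
      exact le_trans (ProbabilityTheory.cdf_le_one (μ := M) x) ht
    rw [this, measure_univ, min_eq_right ht, ENNReal.ofReal_one]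
  · rcases lt_or_ge t 0 with ht0 | ht0
    · have : F ⁻¹' Iic t = ∅ := by
        ext x; simp only [mem_preimage, mem_Iic, mem_empty_iff_false, iff_false, not_le]
        exact lt_of_lt_of_le ht0 (ProbabilityTheory.cdf_nonneg (μ := M) x)
      rw [this, measure_empty, min_eq_left ht.le, ENNReal.ofReal_eq_zero.mpr ht0.le]
    · -- 0 ≤ t < 1
      rw [min_eq_left ht.le]
      have hab : α - 1 ≤ β := by linarith
      have hmem : t ∈ Icc (F (α - 1)) (F β) := by rw [hF0, hFβ]; exact ⟨ht0, ht.le⟩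
      obtain ⟨c, hc, hFc⟩ := intermediate_value_Icc hab hcont.continuousOn hmem
      set S := ⇑F ⁻¹' Iic t with hS
      have hSclosed : IsClosed S := IsClosed.preimage hcont isClosed_Iic
      have hSne : S.Nonempty := ⟨c, by simp [hS, hFc]⟩
      have hSbdd : BddAbove S := by
        refine ⟨β, fun x hx => ?_⟩
        by_contra h
        push_neg at h
        have : (1:ℝ) ≤ F x := hFβ ▸ ProbabilityTheory.monotone_cdf M h.le
        have : F x ≤ t := hx
        linarith
      have hd := hSclosed.csSup_mem hSne hSbdd
      have hdle : F (sSup S) ≤ t := hd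
      have h1 : ENNReal.ofReal t ≤ M S := by
        calc ENNReal.ofReal t = ENNReal.ofReal (F c) := by rw [hFc]
        _ = M (Iic c) := ProbabilityTheory.ofReal_cdf (μ := M) c
        _ ≤ M S := by
            refine measure_mono (fun x hx => ?_)
            exact le_trans (ProbabilityTheory.monotone_cdf M hx) (le_of_eq hFc)
      have h2 : M S ≤ ENNReal.ofReal t := by
        calc M S ≤ M (Iic (sSup S)) := by
              refine measure_mono (fun x hx => le_csSup hSbdd hx)
        _ = ENNReal.ofReal (F (sSup S)) := (ProbabilityTheory.ofReal_cdf (μ := M) _).symm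
        _ ≤ ENNReal.ofReal t := ENNReal.ofReal_le_ofReal hdle
      exact le_antisymm h2 h1

open Complex in
lemma key_integral (M : Measure ℝ) [IsProbabilityMeasure M]
    (hcont : Continuous (ProbabilityTheory.cdf M))
    (hmap : M.map (ProbabilityTheory.cdf M) = volume.restrict (Set.Ioc 0 1))
    (k : ℤ) (hk : k ≠ 0) :
    ∫ x, Complex.exp (2 * Real.pi * k * Complex.I * (ProbabilityTheory.cdf M x)) ∂M = 0 := by
  set c : ℂ := 2 * Real.pi * k * Complex.I with hc
  have hcne : c ≠ 0 := by
    simp only [hc]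
    refine mul_ne_zero (mul_ne_zero (mul_ne_zero two_ne_zero ?_) ?_) Complex.I_ne_zero
    · exact_mod_cast Real.pi_ne_zero
    · exact_mod_cast hk
  have hg : Continuous (fun t : ℝ => Complex.exp (c * t)) := by continuity
  have := MeasureTheory.integral_map (μ := M) (φ := ⇑(ProbabilityTheory.cdf M))
      (f := fun t : ℝ => Complex.exp (c * t)) hcont.aemeasurable
      (hg.aestronglyMeasurable)
  rw [hmap] at this
  rw [← this]
  have h01 : (0:ℝ) ≤ 1 := zero_le_one
  rw [show ∫ t in Set.Ioc (0:ℝ) 1, Complex.exp (c * t) = ∫ t in (0:ℝ)..1, Complex.exp (c * t)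
    from (intervalIntegral.integral_of_le h01).symm]
  rw [integral_exp_mul_complex hcne]
  have h1 : Complex.exp (c * 1) = 1 := by
    rw [mul_one, hc, show (2 : ℂ) * Real.pi * k * Complex.I = k * (2 * Real.pi * Complex.I) by ring]
    exact Complex.exp_int_mul_two_pi_mul_I k
  have h0 : Complex.exp (c * 0) = 1 := by rw [mul_zero, Complex.exp_zero]
  rw [Complex.ofReal_one, Complex.ofReal_zero, h1, h0, sub_self, zero_div]

lemma tau_cfc {A : Type*} [CStarAlgebra A] (τ : A →ₗ[ℂ] ℂ)
    (M : Measure ℝ) [IsProbabilityMeasure M] (b : A) (hb : IsSelfAdjoint b)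
    (hdist : ∀ f : C(ℝ, ℝ), τ (cfc (⇑f) b) = ((∫ x, f x ∂M : ℝ) : ℂ))
    (h : ℝ → ℂ) (hh : Continuous h) (hbound : ∀ x, ‖h x‖ ≤ 1) :
    τ (cfc (fun z : ℂ => h z.re) b) = ∫ x, h x ∂M := by
  have hbn : IsStarNormal b := hb.isStarNormal
  have hInt : Integrable h M :=
    (integrable_const (1:ℝ)).mono' hh.aestronglyMeasurable (Filter.Eventually.of_forall hbound)
  have hre : Continuous fun x : ℝ => (h x).re := Complex.continuous_re.comp hh
  have him : Continuous fun x : ℝ => (h x).im := Complex.continuous_im.comp hh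
  have hsplit : (fun z : ℂ => h z.re) =
      (fun z : ℂ => (((h z.re).re : ℝ) : ℂ) + Complex.I • (((h z.re).im : ℝ) : ℂ)) := by
    funext z
    simp only [smul_eq_mul]
    rw [mul_comm, Complex.re_add_im]
  have hcR : Continuous fun z : ℂ => (((h z.re).re : ℝ) : ℂ) := by
    exact Complex.continuous_ofReal.comp (hre.comp Complex.continuous_re)
  have hcI : Continuous fun z : ℂ => (((h z.re).im : ℝ) : ℂ) := by
    exact Complex.continuous_ofReal.comp (him.comp Complex.continuous_re)
  rw [hsplit, cfc_add _ _ _ hcR.continuousOn (by exact ((continuous_const : Continuous fun _ : ℂ => Complex.I).smul hcI).continuousOn),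
    cfc_smul Complex.I _ _ hcI.continuousOn, map_add, LinearMap.map_smul]
  have e1 : cfc (fun z : ℂ => (((h z.re).re : ℝ) : ℂ)) b = cfc (fun x : ℝ => (h x).re) b :=
    (cfc_real_eq_complex (fun x : ℝ => (h x).re) hb).symm
  have e2 : cfc (fun z : ℂ => (((h z.re).im : ℝ) : ℂ)) b = cfc (fun x : ℝ => (h x).im) b :=
    (cfc_real_eq_complex (fun x : ℝ => (h x).im) hb).symm
  have d1 := hdist ⟨_, hre⟩
  have d2 := hdist ⟨_, him⟩
  simp only [ContinuousMap.coe_mk] at d1 d2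
  rw [e1, e2, d1, d2]
  simp only [smul_eq_mul]
  rw [← integral_re_add_im hInt]
  simp only [RCLike.re_to_complex, RCLike.im_to_complex, RCLike.I_to_complex]
  rw [add_comm, mul_comm Complex.I, add_comm]
  norm_cast

/-- Let `M` be a probability measure on `ℝ`, absolutely continuous with respect to
Lebesgue measure, with compact support equal to an interval `[α,β]`, `α < β`.  Let `b` be
a self-adjoint element of a C*-probability space `(A,τ)` with faithful state whose
distribution with respect to `τ` is `M` (so `spectrum b = [α,β]` and `τ(f(b)) = ∫ f dM`
for continuous `f`).  Then `C*(1,b)` contains a Haar unitary with respect to `τ`. -/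
theorem stmt19 {A : Type*} [CStarAlgebra A] [PartialOrder A] [StarOrderedRing A]
    (τ : A →ₗ[ℂ] ℂ) (hτ1 : τ 1 = 1) (hτpos : ∀ x : A, 0 ≤ τ (star x * x))
    (hfaith : ∀ x : A, τ (star x * x) = 0 → x = 0)
    (α β : ℝ) (hαβ : α < β)
    (M : Measure ℝ) [IsProbabilityMeasure M]
    (hsupp₁ : M (Set.Icc α β)ᶜ = 0)
    (hsupp₂ : ∀ s : Set ℝ, IsOpen s → (s ∩ Set.Icc α β).Nonempty → 0 < M s)
    (habs : M ≪ volume)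
    (b : A) (hb : IsSelfAdjoint b)
    (hspec : spectrum ℝ b = Set.Icc α β)
    (hdist : ∀ f : C(ℝ, ℝ), τ (cfc (⇑f) b) = ((∫ x, f x ∂M : ℝ) : ℂ)) :
    ∃ u : unitary A, (u : A) ∈ (StarAlgebra.adjoin ℂ {b}).topologicalClosure ∧
      ∀ n : ℤ, n ≠ 0 → τ ((u ^ n : unitary A) : A) = 0 := by
  have hbn : IsStarNormal b := hb.isStarNormal
  have hM0 : ∀ x : ℝ, M {x} = 0 := fun x => habs Real.volume_singleton
  have hcont : Continuous (ProbabilityTheory.cdf M) := cdf_cont M hM0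
  have hmap := cdf_map α β hαβ M hsupp₁ hcont
  set F : ℝ → ℝ := ⇑(ProbabilityTheory.cdf M) with hFdef
  set E : ℤ → ℂ → ℂ := fun k z => Complex.exp (2 * Real.pi * k * Complex.I * F z.re) with hEdef
  have hEcont : ∀ k : ℤ, Continuous (E k) := by
    intro k
    apply Complex.continuous_exp.comp
    exact continuous_const.mul (Complex.continuous_ofReal.comp (hcont.comp Complex.continuous_re))
  have hτE : ∀ k : ℤ, k ≠ 0 → τ (cfc (E k) b) = 0 := by
    intro k hk
    have hb1 : ∀ x : ℝ, ‖Complex.exp (2 * Real.pi * k * Complex.I * F x)‖ ≤ 1 := by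
      intro x
      rw [Complex.norm_exp]
      have : (2 * (Real.pi : ℂ) * k * Complex.I * (F x : ℂ)).re = 0 := by
        simp [Complex.mul_re, Complex.mul_im]
      rw [this, Real.exp_zero]
    have hcg : Continuous fun x : ℝ => Complex.exp (2 * Real.pi * k * Complex.I * F x) :=
      Complex.continuous_exp.comp (continuous_const.mul (Complex.continuous_ofReal.comp hcont))
    have := tau_cfc τ M b hb hdist
      (fun x : ℝ => Complex.exp (2 * Real.pi * k * Complex.I * F x)) hcg hb1
    rw [hEdef]
    rw [this]
    exact key_integral M hcont hmap k hk
  have hmulE : ∀ k l : ℤ, cfc (E k) b * cfc (E l) b = cfc (E (k + l)) b := by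
    intro k l
    rw [← cfc_mul _ _ b (hEcont k).continuousOn (hEcont l).continuousOn]
    apply cfc_congr
    intro z _
    show Complex.exp _ * Complex.exp _ = _
    rw [← Complex.exp_add]
    congr 1
    push_cast
    ring
  have hstarE : ∀ k : ℤ, star (cfc (E k) b) = cfc (E (-k)) b := by
    intro k
    rw [← cfc_star]
    apply cfc_congr
    intro z _
    show star (Complex.exp _) = Complex.exp _
    rw [Complex.star_def, ← Complex.exp_conj]
    congr 1
    simp only [map_mul, Complex.conj_I, Complex.conj_ofReal, map_ofNat, map_intCast]
    push_cast
    ring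
  have hone : cfc (E 0) b = 1 := by
    have he0 : E 0 = fun _ => (1 : ℂ) := by
      funext z
      simp [hEdef]
    rw [he0]
    exact cfc_const_one ℂ b
  set uA := cfc (E 1) b with huA
  have humem : uA ∈ unitary A := by
    refine Unitary.mem_iff.mpr ⟨?_, ?_⟩
    · rw [huA, hstarE 1, hmulE (-1) 1, (by norm_num : (-1 : ℤ) + 1 = 0), hone]
    · rw [huA, hstarE 1, hmulE 1 (-1), (by norm_num : (1 : ℤ) + -1 = 0), hone]
  have hmemel : ∀ k : ℤ, cfc (E k) b ∈ (StarAlgebra.adjoin ℂ {b}).topologicalClosure := by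
    intro k
    have h1 := cfc_apply (E k) b hbn (hEcont k).continuousOn
    rw [h1, cfcHom_eq_of_isStarNormal]
    exact ((continuousFunctionalCalculus b) ⟨_, ((hEcont k).continuousOn).restrict⟩).2
  have hpowE : ∀ m : ℕ, uA ^ m = cfc (E m) b := by
    intro m
    rw [huA, ← cfc_pow (E 1) m b (hEcont 1).continuousOn]
    apply cfc_congr
    intro z _
    show Complex.exp _ ^ m = Complex.exp _
    rw [← Complex.exp_nat_mul]
    congr 1
    push_cast
    ring
  refine ⟨⟨uA, humem⟩, hmemel 1, ?_⟩
  intro n hn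
  induction n using Int.rec with
  | ofNat m =>
      have hm : m ≠ 0 := by simpa using hn
      have hcoe : (((⟨uA, humem⟩ : unitary A) ^ (Int.ofNat m) : unitary A) : A) = uA ^ m := by
        rw [Int.ofNat_eq_coe, zpow_natCast]
        exact SubmonoidClass.coe_pow _ m
      rw [hcoe, hpowE m]
      exact hτE m (by exact_mod_cast hm)
  | negSucc m =>
      have hcoe : (((⟨uA, humem⟩ : unitary A) ^ (Int.negSucc m) : unitary A) : A)
          = star (uA ^ (m + 1)) := by
        rw [zpow_negSucc, ← Unitary.star_eq_inv, Unitary.coe_star]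
        congr 1
      rw [hcoe, hpowE (m + 1), hstarE]
      refine hτE _ ?_
      omega
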